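/- Every element of Sym(Ω) for Ω infinite is the product of two elements in the same conjugacy class (the class of replete permutations); equivalently, the square of the conjugacy class of replete permutations is all of Sym(Ω). -/

import Mathlib

/-- The orbit of `x` under the permutation `f`. -/
def permOrbit {Ω : Type*} (f : Equiv.Perm Ω) (x : Ω) : Set Ω :=
  {y : Ω | ∃ n : ℤ, (f ^ n) x = y}

/-- A permutation of an infinite set `Ω` is replete if for every positive
cardinality `c ≤ ℵ₀` it has `|Ω|` orbits of cardinality `c`. -/
def Replete {Ω : Type*} (f : Equiv.Perm Ω) : Prop :=
  ∀ c : Cardinal, 0 < c → c ≤ Cardinal.aleph0 →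
    Cardinal.mk {s : Set Ω // (∃ x : Ω, s = permOrbit f x) ∧ Cardinal.mk ↥s = c} =
      Cardinal.mk Ω

open Equiv Set Cardinal

universe u v w

namespace Rep

variable {Ω : Type u} {α : Type v} {β : Type w}

lemma self_mem_permOrbit (f : Perm Ω) (x : Ω) : x ∈ permOrbit f x := ⟨0, by simp⟩

lemma permOrbit_nonempty (f : Perm Ω) (x : Ω) : (permOrbit f x).Nonempty :=
  ⟨x, self_mem_permOrbit f x⟩

lemma permOrbit_eq_of_mem {f : Perm Ω} {x y : Ω} (h : y ∈ permOrbit f x) :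
    permOrbit f y = permOrbit f x := by
  obtain ⟨n, rfl⟩ := h
  ext z
  constructor
  · rintro ⟨m, rfl⟩
    exact ⟨m + n, by rw [zpow_add, Perm.mul_apply]⟩
  · rintro ⟨m, rfl⟩
    refine ⟨m - n, ?_⟩
    rw [← Perm.mul_apply, ← zpow_add, sub_add_cancel]

lemma apply_mem_permOrbit (f : Perm Ω) (x : Ω) : f x ∈ permOrbit f x :=
  ⟨1, by simp⟩

lemma permOrbit_apply (f : Perm Ω) (x : Ω) : permOrbit f (f x) = permOrbit f x :=
  permOrbit_eq_of_mem (apply_mem_permOrbit f x)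

lemma mem_permOrbit_iff_apply {f : Perm Ω} {x z : Ω} :
    z ∈ permOrbit f x ↔ f z ∈ permOrbit f x := by
  constructor
  · rintro ⟨n, rfl⟩
    exact ⟨1 + n, by rw [zpow_add, Perm.mul_apply, zpow_one]⟩
  · rintro ⟨n, hn⟩
    refine ⟨-1 + n, ?_⟩
    rw [zpow_add, Perm.mul_apply, hn, zpow_neg, zpow_one]
    exact f.symm_apply_apply z

lemma permOrbit_countable (f : Perm Ω) (x : Ω) : (permOrbit f x).Countable := by
  have : permOrbit f x = Set.range (fun n : ℤ => (f ^ n) x) := by ext z; exact Iff.rfl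
  rw [this]
  exact Set.countable_range _

lemma mk_permOrbit_le (f : Perm Ω) (x : Ω) : #(permOrbit f x) ≤ Cardinal.aleph0 :=
  (permOrbit_countable f x).le_aleph0

lemma mk_permOrbit_pos (f : Perm Ω) (x : Ω) : 0 < #(permOrbit f x) := by
  rw [pos_iff_ne_zero, Cardinal.mk_ne_zero_iff]
  exact ⟨⟨x, self_mem_permOrbit f x⟩⟩

/-- The intertwining power lemma. -/
lemma zpow_comm {f : Perm Ω} {σ : Perm α} {J : α → Ω}
    (h : ∀ a, f (J a) = J (σ a)) : ∀ (n : ℤ) (a : α), (f ^ n) (J a) = J ((σ ^ n) a) := by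
  have hinv : ∀ a, f⁻¹ (J a) = J (σ⁻¹ a) := by
    intro a
    have h2 := h (σ⁻¹ a)
    rw [show σ (σ⁻¹ a) = a from σ.apply_symm_apply a] at h2
    rw [← h2, show f⁻¹ (f (J (σ⁻¹ a))) = J (σ⁻¹ a) from f.symm_apply_apply _]
  intro n
  induction n using Int.induction_on with
  | zero => simp
  | succ k ih =>
      intro a
      rw [zpow_add_one, zpow_add_one, Perm.mul_apply, Perm.mul_apply, h, ih]
  | pred k ih =>
      intro a
      rw [zpow_sub_one, zpow_sub_one, Perm.mul_apply, Perm.mul_apply, hinv, ih]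

lemma permOrbit_image {f : Perm Ω} {σ : Perm α} {J : α → Ω}
    (h : ∀ a, f (J a) = J (σ a)) (a : α) :
    permOrbit f (J a) = J '' permOrbit σ a := by
  ext z
  constructor
  · rintro ⟨n, rfl⟩
    exact ⟨(σ ^ n) a, ⟨n, rfl⟩, (zpow_comm h n a).symm⟩
  · rintro ⟨w, ⟨n, rfl⟩, rfl⟩
    exact ⟨n, zpow_comm h n a⟩

/-- Generic upper bound on number of orbits of any prescribed size. -/
lemma mk_orbitSets_le (f : Perm Ω) (c : Cardinal.{u}) :
    #{s : Set Ω // (∃ x : Ω, s = permOrbit f x) ∧ #s = c} ≤ #Ω := by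
  classical
  have hex : ∀ s : {s : Set Ω // (∃ x : Ω, s = permOrbit f x) ∧ #s = c},
      ∃ x : Ω, s.1 = permOrbit f x := fun s => s.2.1
  choose pt hpt using hex
  refine Cardinal.mk_le_of_injective (f := pt) ?_
  intro s t hst
  apply Subtype.ext
  rw [hpt s, hpt t, hst]

/-- Descend a countable cardinal to another universe. -/
lemma descend {c : Cardinal.{u}} (hle : c ≤ Cardinal.aleph0) :
    ∃ c₀ : Cardinal.{v}, Cardinal.lift.{u} c₀ = Cardinal.lift.{v} c ∧
      (0 < c → 0 < c₀) ∧ c₀ ≤ Cardinal.aleph0 := by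
  rcases lt_or_eq_of_le hle with hlt | rfl
  · obtain ⟨n, rfl⟩ := Cardinal.lt_aleph0.mp hlt
    refine ⟨n, by simp [Cardinal.lift_natCast], ?_, (Cardinal.nat_lt_aleph0 n).le⟩
    intro hp
    rw [pos_iff_ne_zero] at hp ⊢
    simpa [Nat.cast_eq_zero] using (by simpa [Nat.cast_eq_zero] using hp : n ≠ 0)
  · exact ⟨Cardinal.aleph0, by simp, fun _ => Cardinal.aleph0_pos, le_rfl⟩

lemma card_transfer {A : Type v} {B : Type u} (e : A ≃ B) {c : Cardinal.{v}} {c' : Cardinal.{u}}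
    (h : Cardinal.lift.{u} c = Cardinal.lift.{v} c') : #A = c ↔ #B = c' := by
  have he : Cardinal.lift.{u} #A = Cardinal.lift.{v} #B := Cardinal.lift_mk_eq'.mpr ⟨e⟩
  constructor
  · intro hA
    rw [hA] at he
    exact (Cardinal.lift_inj.mp (he.symm.trans h)).symm |>.symm
  · intro hB
    rw [hB] at he
    exact Cardinal.lift_inj.mp (he.trans h.symm)

/-- The workhorse: lift repleteness along an injection intertwining the actions. -/
lemma replete_of_inj {M : Type u} {α : Type v} {f : Perm M} {σ : Perm α} {J : α → M}
    (hJ : Function.Injective J) (h : ∀ a, f (J a) = J (σ a))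
    (hcard : Cardinal.lift.{v} #M = Cardinal.lift.{u} #α) (hσ : Replete σ) : Replete f := by
  intro c hc hle
  refine le_antisymm (mk_orbitSets_le f c) ?_
  obtain ⟨c₀, hlift, hpos, hle₀⟩ := descend.{u,v} hle
  have hσc := hσ c₀ (hpos hc) hle₀
  have key : ∀ s : {s : Set α // (∃ x : α, s = permOrbit σ x) ∧ #s = c₀},
      (∃ x : M, J '' s.1 = permOrbit f x) ∧ #(J '' s.1) = c := by
    rintro ⟨s, ⟨x, rfl⟩, hmk⟩
    refine ⟨⟨J x, (permOrbit_image h x).symm⟩, ?_⟩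
    exact (card_transfer (Equiv.Set.image J _ hJ) hlift).mp hmk
  have hemb : Nonempty ({s : Set α // (∃ x : α, s = permOrbit σ x) ∧ #s = c₀} ↪
      {s : Set M // (∃ x : M, s = permOrbit f x) ∧ #s = c}) := by
    refine ⟨⟨fun s => ⟨J '' s.1, key s⟩, ?_⟩⟩
    intro s t hst
    apply Subtype.ext
    have := congrArg Subtype.val hst
    simpa using Set.image_injective.mpr hJ this
  have hle2 : Cardinal.lift.{u} #{s : Set α // (∃ x : α, s = permOrbit σ x) ∧ #s = c₀} ≤
      Cardinal.lift.{v} #{s : Set M // (∃ x : M, s = permOrbit f x) ∧ #s = c} :=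
    Cardinal.lift_mk_le'.mpr hemb
  rw [hσc, ← hcard] at hle2
  exact Cardinal.lift_le.mp hle2

end Rep

namespace Rep

variable {Ω : Type u} {α : Type v} {β : Type w}

/-- Transport of permutations along an equivalence, as a monoid hom. -/
def permCongrHom (e : α ≃ β) : Perm α →* Perm β where
  toFun f := (e.symm.trans f).trans e
  map_one' := by ext x; simp
  map_mul' f g := by ext x; simp [Perm.mul_apply]

@[simp] lemma permCongrHom_apply (e : α ≃ β) (f : Perm α) (x : α) :
    permCongrHom e f (e x) = e (f x) := by
  simp [permCongrHom]

lemma permCongrHom_apply' (e : α ≃ β) (f : Perm α) (y : β) :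
    permCongrHom e f y = e (f (e.symm y)) := rfl

lemma replete_permCongrHom (e : α ≃ β) {f : Perm α} (h : Replete f) :
    Replete (permCongrHom e f) :=
  replete_of_inj e.injective (fun a => permCongrHom_apply e f a)
    (Cardinal.lift_mk_eq'.mpr ⟨e.symm⟩) h

end Rep

namespace Rep

variable {Ω : Type u} {α : Type v} {β : Type w}

/-- Canonical countable type carrying one orbit of each size. -/
abbrev Dt : Type := (Σ n : ℕ, Fin (n+1)) ⊕ ℤ

def rhoD : Perm Dt :=
  Equiv.sumCongr (Equiv.sigmaCongrRight fun n => finRotate (n+1)) (Equiv.addLeft (1:ℤ))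

instance : Infinite Dt := Infinite.of_injective Sum.inr Sum.inr_injective

lemma mk_Dt : #Dt = Cardinal.aleph0 := Cardinal.mk_eq_aleph0 Dt

open Fin.NatCast in
lemma finRotate_pow_zero (n : ℕ) : ∀ m : ℕ, ((finRotate (n+1)) ^ m) 0 = (m : Fin (n+1)) := by
  intro m
  induction m with
  | zero => simp
  | succ k ih =>
      rw [pow_succ', Perm.mul_apply, ih, finRotate_succ_apply, Nat.cast_add, Nat.cast_one]

open Fin.NatCast in
lemma permOrbit_finRotate (n : ℕ) : permOrbit (finRotate (n+1)) 0 = Set.univ := by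
  apply Set.eq_univ_of_forall
  intro j
  refine ⟨((j : ℕ) : ℤ), ?_⟩
  rw [zpow_natCast, finRotate_pow_zero, Fin.cast_val_eq_self]

lemma addLeft_zpow_zero : ∀ n : ℤ, ((Equiv.addLeft (1:ℤ)) ^ n) 0 = n := by
  have key : ∀ n : ℤ, ∀ z : ℤ, ((Equiv.addLeft (1:ℤ)) ^ n) z = n + z := by
    intro n
    induction n using Int.induction_on with
    | zero => simp
    | succ k ih => intro z; rw [zpow_add_one, Perm.mul_apply, ih]; simp; ring
    | pred k ih => intro z; rw [zpow_sub_one, Perm.mul_apply, ih]; simp; ring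
  intro n; rw [key]; ring

lemma permOrbit_addLeft : permOrbit (Equiv.addLeft (1:ℤ)) 0 = Set.univ := by
  apply Set.eq_univ_of_forall
  intro j
  exact ⟨j, addLeft_zpow_zero j⟩

section Prod

variable (X : Type u) [Infinite X]

def prodP : Perm (X × Dt) := Equiv.prodCongr (Equiv.refl X) rhoD

lemma mk_prod_Dt : #(X × Dt) = #X := by
  rw [Cardinal.mk_prod, Cardinal.lift_uzero, mk_Dt, Cardinal.lift_aleph0]
  exact Cardinal.mul_eq_left (Cardinal.aleph0_le_mk X) (Cardinal.aleph0_le_mk X) Cardinal.aleph0_ne_zero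

lemma replete_prodP : Replete (prodP X) := by
  intro c hc hle
  refine le_antisymm (mk_orbitSets_le _ c) ?_
  rw [mk_prod_Dt]
  rcases lt_or_eq_of_le hle with hlt | rfl
  · -- finite size
    obtain ⟨n, rfl⟩ := Cardinal.lt_aleph0.mp hlt
    obtain ⟨m, rfl⟩ : ∃ m, n = m + 1 := by
      rcases n with _ | m
      · exact absurd hc (by simp)
      · exact ⟨m, rfl⟩
    set K : ∀ _x : X, Fin (m+1) → X × Dt := fun x k => (x, Sum.inl ⟨m, k⟩) with hK
    have hKint : ∀ x k, prodP X (K x k) = K x (finRotate (m+1) k) := fun _ _ => rfl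
    have horb : ∀ x, permOrbit (prodP X) (x, Sum.inl ⟨m, 0⟩) = K x '' Set.univ := by
      intro x
      have := permOrbit_image (hKint x) 0
      rwa [permOrbit_finRotate] at this
    have hKinj : ∀ x, Function.Injective (K x) := by
      intro x a b hab
      simpa [hK] using hab
    have hmk : ∀ x, #(K x '' Set.univ) = ((m+1 : ℕ) : Cardinal.{u}) := by
      intro x
      have h0 : #(Set.univ : Set (Fin (m+1))) = ((m+1 : ℕ) : Cardinal.{0}) := by
        rw [Cardinal.mk_univ, Cardinal.mk_fintype, Fintype.card_fin]
      exact (card_transfer (Equiv.Set.image (K x) _ (hKinj x))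
        (by rw [Cardinal.lift_natCast, Cardinal.lift_natCast])).mp h0
    refine Cardinal.mk_le_of_injective (f := fun x =>
      (⟨permOrbit (prodP X) (x, Sum.inl ⟨m, 0⟩), ⟨_, rfl⟩, by rw [horb x]; exact hmk x⟩ :
        {s : Set (X × Dt) // (∃ p, s = permOrbit (prodP X) p) ∧ #s = ((m+1:ℕ) : Cardinal.{u})})) ?_
    intro x y hxy
    have hval := congrArg Subtype.val hxy
    simp only at hval
    have hx : (x, (Sum.inl ⟨m, 0⟩ : Dt)) ∈ permOrbit (prodP X) (y, Sum.inl ⟨m, 0⟩) := by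
      rw [← hval]; exact self_mem_permOrbit _ _
    rw [horb y] at hx
    obtain ⟨k, -, hk⟩ := hx
    exact (congrArg Prod.fst hk).symm
  · -- infinite size
    set K : ∀ _x : X, ℤ → X × Dt := fun x z => (x, Sum.inr z) with hK
    have hKint : ∀ x z, prodP X (K x z) = K x (Equiv.addLeft (1:ℤ) z) := fun _ _ => rfl
    have horb : ∀ x, permOrbit (prodP X) (x, Sum.inr 0) = K x '' Set.univ := by
      intro x
      have := permOrbit_image (hKint x) 0
      rwa [permOrbit_addLeft] at this
    have hKinj : ∀ x, Function.Injective (K x) := by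
      intro x a b hab
      simpa [hK] using hab
    have hmk : ∀ x, #(K x '' Set.univ) = Cardinal.aleph0 := by
      intro x
      have h0 : #(Set.univ : Set ℤ) = Cardinal.aleph0 := by
        rw [Cardinal.mk_univ, Cardinal.mk_int]
      exact (card_transfer (Equiv.Set.image (K x) _ (hKinj x))
        (by rw [Cardinal.lift_aleph0, Cardinal.lift_aleph0])).mp h0
    refine Cardinal.mk_le_of_injective (f := fun x =>
      (⟨permOrbit (prodP X) (x, Sum.inr 0), ⟨_, rfl⟩, by rw [horb x]; exact hmk x⟩ :
        {s : Set (X × Dt) // (∃ p, s = permOrbit (prodP X) p) ∧ #s = Cardinal.aleph0})) ?_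
    intro x y hxy
    have hval := congrArg Subtype.val hxy
    simp only at hval
    have hx : (x, (Sum.inr 0 : Dt)) ∈ permOrbit (prodP X) (y, Sum.inr 0) := by
      rw [← hval]; exact self_mem_permOrbit _ _
    rw [horb y] at hx
    obtain ⟨k, -, hk⟩ := hx
    exact (congrArg Prod.fst hk).symm

noncomputable def stdEquiv : X ≃ X × Dt :=
  Classical.choice (Cardinal.eq.mp (mk_prod_Dt X).symm)

noncomputable def stdPerm : Perm X := permCongrHom (stdEquiv X).symm (prodP X)

lemma replete_stdPerm : Replete (stdPerm X) :=
  replete_permCongrHom _ (replete_prodP X)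

end Prod

end Rep

namespace Rep

open Equiv.Perm

attribute [local instance] Classical.propDecidable
set_option linter.unusedSectionVars false

section Split

variable {Ω : Type u} [Infinite Ω]

lemma commute_ofSubtype {U : Set Ω} (fU : Perm {x // x ∈ U}) (fV : Perm {x // x ∉ U}) :
    Commute (Equiv.Perm.ofSubtype fU) (Equiv.Perm.ofSubtype fV) := by
  show Equiv.Perm.ofSubtype fU * Equiv.Perm.ofSubtype fV
      = Equiv.Perm.ofSubtype fV * Equiv.Perm.ofSubtype fU
  ext x
  by_cases hx : x ∈ U
  · rw [Perm.mul_apply, Perm.mul_apply,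
      Equiv.Perm.ofSubtype_apply_of_not_mem fV (show ¬ (x ∉ U) from fun h => h hx),
      Equiv.Perm.ofSubtype_apply_of_mem fU hx,
      Equiv.Perm.ofSubtype_apply_of_not_mem fV (show ¬ (↑(fU ⟨x, hx⟩) ∉ U) from fun h => h (fU ⟨x, hx⟩).2)]
  · rw [Perm.mul_apply, Perm.mul_apply,
      Equiv.Perm.ofSubtype_apply_of_not_mem fU hx,
      Equiv.Perm.ofSubtype_apply_of_mem fV hx,
      Equiv.Perm.ofSubtype_apply_of_not_mem fU (fV ⟨x, hx⟩).2]

lemma glue_eq {g : Perm Ω} {U : Set Ω} (hU : ∀ x, x ∈ U ↔ g x ∈ U) :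
    Equiv.Perm.ofSubtype (g.subtypePerm (fun x => (hU x).symm)) *
      Equiv.Perm.ofSubtype (g.subtypePerm (p := fun x => x ∉ U)
        (fun x => not_iff_not.mpr (hU x).symm)) = g := by
  set A := g.subtypePerm (fun x => (hU x).symm) with hA
  set B := g.subtypePerm (p := fun x => x ∉ U) (fun x => not_iff_not.mpr (hU x).symm) with hB
  ext x
  by_cases hx : x ∈ U
  · have h1 : (Equiv.Perm.ofSubtype B) x = x :=
      Equiv.Perm.ofSubtype_apply_of_not_mem B (not_not_intro hx)
    have h2 : (Equiv.Perm.ofSubtype A) x = g x := by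
      rw [Equiv.Perm.ofSubtype_apply_of_mem A hx]; rfl
    rw [Perm.mul_apply, h1, h2]
  · have h1 : (Equiv.Perm.ofSubtype B) x = g x := by
      rw [Equiv.Perm.ofSubtype_apply_of_mem B hx]; rfl
    have h2 : (Equiv.Perm.ofSubtype A) (g x) = g x :=
      Equiv.Perm.ofSubtype_apply_of_not_mem A ((not_iff_not.mpr (hU x)).mp hx)
    rw [Perm.mul_apply, h1, h2]

lemma split_case (g : Perm Ω) (U : Set Ω)
    (hU : ∀ x, x ∈ U ↔ g x ∈ U) (h1 : #{x // x ∈ U} = #Ω) (h2 : #{x // x ∉ U} = #Ω) :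
    ∃ a b : Perm Ω, Replete a ∧ Replete b ∧ g = a * b := by
  have hUinf : Infinite {x // x ∈ U} := by
    rw [Cardinal.infinite_iff, h1]; exact Cardinal.aleph0_le_mk Ω
  have hVinf : Infinite {x // x ∉ U} := by
    rw [Cardinal.infinite_iff, h2]; exact Cardinal.aleph0_le_mk Ω
  set gU := g.subtypePerm (fun x => (hU x).symm) with hgU
  set gV := g.subtypePerm (p := fun x => x ∉ U) (fun x => not_iff_not.mpr (hU x).symm) with hgV
  set r := stdPerm {x // x ∈ U} with hr
  set sV := stdPerm {x // x ∉ U} with hsV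
  set a := Equiv.Perm.ofSubtype (gU * r⁻¹) * Equiv.Perm.ofSubtype sV with ha
  set b := Equiv.Perm.ofSubtype r * Equiv.Perm.ofSubtype (sV⁻¹ * gV) with hb
  refine ⟨a, b, ?_, ?_, ?_⟩
  · -- Replete a, witnessed on the complement of U
    refine replete_of_inj (J := (Subtype.val : {x // x ∉ U} → Ω)) Subtype.val_injective
      (σ := sV) ?_ ?_ (replete_stdPerm _)
    · intro y
      have hy1 : Equiv.Perm.ofSubtype sV ↑y = ↑(sV y) :=
        Equiv.Perm.ofSubtype_apply_of_mem sV y.2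
      have hy2 : Equiv.Perm.ofSubtype (gU * r⁻¹) ↑(sV y) = ↑(sV y) :=
        Equiv.Perm.ofSubtype_apply_of_not_mem _ (sV y).2
      rw [ha, Perm.mul_apply, hy1, hy2]
    · rw [Cardinal.lift_inj.mpr h2]
  · -- Replete b, witnessed on U
    refine replete_of_inj (J := (Subtype.val : {x // x ∈ U} → Ω)) Subtype.val_injective
      (σ := r) ?_ ?_ (replete_stdPerm _)
    · intro y
      have hy1 : Equiv.Perm.ofSubtype (sV⁻¹ * gV) ↑y = ↑y :=
        Equiv.Perm.ofSubtype_apply_of_not_mem _ (not_not_intro y.2)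
      have hy2 : Equiv.Perm.ofSubtype r ↑y = ↑(r y) :=
        Equiv.Perm.ofSubtype_apply_of_mem r y.2
      rw [hb, Perm.mul_apply, hy1, hy2]
    · rw [Cardinal.lift_inj.mpr h1]
  · -- product
    have key : a * b = g := by
      calc a * b = Equiv.Perm.ofSubtype (gU * r⁻¹) *
          (Equiv.Perm.ofSubtype sV * Equiv.Perm.ofSubtype r) *
          Equiv.Perm.ofSubtype (sV⁻¹ * gV) := by
            rw [ha, hb]; group
      _ = Equiv.Perm.ofSubtype (gU * r⁻¹) *
          (Equiv.Perm.ofSubtype r * Equiv.Perm.ofSubtype sV) *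
          Equiv.Perm.ofSubtype (sV⁻¹ * gV) := by
            rw [(commute_ofSubtype r sV).eq]
      _ = (Equiv.Perm.ofSubtype (gU * r⁻¹) * Equiv.Perm.ofSubtype r) *
          (Equiv.Perm.ofSubtype sV * Equiv.Perm.ofSubtype (sV⁻¹ * gV)) := by group
      _ = Equiv.Perm.ofSubtype gU * Equiv.Perm.ofSubtype gV := by
            rw [← map_mul, ← map_mul]; group
        _ = g := glue_eq hU
    exact key.symm

end Split

end Rep

namespace Rep

section Dich

variable {Ω : Type u} [Infinite Ω]

lemma sUnion_orbits (g : Perm Ω) : ⋃₀ Set.range (permOrbit g) = Set.univ := by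
  apply Set.eq_univ_of_forall
  intro x
  exact ⟨permOrbit g x, ⟨x, rfl⟩, self_mem_permOrbit g x⟩

lemma mk_orbs_le (g : Perm Ω) : #(Set.range (permOrbit g)) ≤ #Ω := by
  classical
  have hex : ∀ s : Set.range (permOrbit g), ∃ x : Ω, s.1 = permOrbit g x :=
    fun s => ⟨s.2.choose, s.2.choose_spec.symm⟩
  choose pt hpt using hex
  refine Cardinal.mk_le_of_injective (f := pt) ?_
  intro s t hst
  apply Subtype.ext
  rw [hpt s, hpt t, hst]

lemma dichotomy (g : Perm Ω) :
    (∃ x : Ω, (permOrbit g x)ᶜ.Finite) ∨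
    (∃ U : Set Ω, (∀ x, x ∈ U ↔ g x ∈ U) ∧ #{x // x ∈ U} = #Ω ∧ #{x // x ∉ U} = #Ω) := by
  classical
  set Orbs := Set.range (permOrbit g) with hOrbs
  by_cases hfin : Orbs.Finite
  · -- finitely many orbits; there is an infinite one
    have hcnt : (Set.univ : Set Ω).Countable := by
      rw [← sUnion_orbits g]
      refine Set.Countable.sUnion hfin.countable ?_
      rintro s ⟨x, rfl⟩
      exact permOrbit_countable g x
    have hΩcnt : Countable Ω := Set.countable_univ_iff.mp hcnt
    have hΩ : #Ω = Cardinal.aleph0 := Cardinal.mk_eq_aleph0 Ω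
    have hex : ∃ x : Ω, (permOrbit g x).Infinite := by
      by_contra hno
      push_neg at hno
      have : (Set.univ : Set Ω).Finite := by
        rw [← sUnion_orbits g]
        refine Set.Finite.sUnion hfin ?_
        rintro s ⟨x, rfl⟩
        exact hno x
      exact Set.infinite_univ this
    obtain ⟨x₀, hx₀⟩ := hex
    by_cases hc : (permOrbit g x₀)ᶜ.Finite
    · exact Or.inl ⟨x₀, hc⟩
    · right
      refine ⟨permOrbit g x₀, fun x => mem_permOrbit_iff_apply, ?_, ?_⟩
      · have : Countable {x // x ∈ permOrbit g x₀} := (permOrbit_countable g x₀).to_subtype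
        have : Infinite {x // x ∈ permOrbit g x₀} := hx₀.to_subtype
        rw [hΩ]; exact Cardinal.mk_eq_aleph0 _
      · have h1 : Countable ((permOrbit g x₀)ᶜ : Set Ω) :=
          (hcnt.mono (Set.subset_univ _)).to_subtype
        have h2 : Infinite ((permOrbit g x₀)ᶜ : Set Ω) := Set.Infinite.to_subtype hc
        have e : {x // x ∉ permOrbit g x₀} ≃ ((permOrbit g x₀)ᶜ : Set Ω) :=
          Equiv.subtypeEquivRight (by intro x; simp)
        rw [hΩ, Cardinal.mk_congr e]
        exact Cardinal.mk_eq_aleph0 _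
  · -- infinitely many orbits
    right
    have hOinf : Infinite ↥Orbs := Set.Infinite.to_subtype hfin
    have hOale : Cardinal.aleph0 ≤ #↥Orbs := Cardinal.aleph0_le_mk ↥Orbs
    have hsum : #(↥Orbs ⊕ ↥Orbs) = #↥Orbs := by
      simp only [Cardinal.mk_sum, Cardinal.lift_id]
      exact Cardinal.add_eq_self hOale
    obtain ⟨e⟩ := Cardinal.eq.mp hsum.symm   -- e : ↥Orbs ≃ ↥Orbs ⊕ ↥Orbs
    set U : Set Ω := {x : Ω | (e ⟨permOrbit g x, ⟨x, rfl⟩⟩).isLeft} with hUdef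
    have hmemU : ∀ x : Ω, x ∈ U ↔ (e ⟨permOrbit g x, ⟨x, rfl⟩⟩).isLeft := fun x => Iff.rfl
    have hUinv : ∀ x, x ∈ U ↔ g x ∈ U := by
      intro x
      have horb : permOrbit g (g x) = permOrbit g x := permOrbit_apply g x
      rw [hmemU, hmemU]
      have : (⟨permOrbit g (g x), ⟨g x, rfl⟩⟩ : ↥Orbs) = ⟨permOrbit g x, ⟨x, rfl⟩⟩ :=
        Subtype.ext horb
      rw [this]
    -- #Orbs = #Ω
    have hOrbsEq : #↥Orbs = #Ω := by
      refine le_antisymm (mk_orbs_le g) ?_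
      have hsup : ∀ s : ↥Orbs, #↥s.1 ≤ Cardinal.aleph0 := by
        rintro ⟨s, x, rfl⟩
        exact mk_permOrbit_le g x
      have h1 : #Ω ≤ #↥Orbs * Cardinal.aleph0 := by
        have := Cardinal.mk_sUnion_le Orbs
        rw [sUnion_orbits g, Cardinal.mk_univ] at this
        refine this.trans ?_
        exact mul_le_mul_right (ciSup_le' hsup) _
      rwa [Cardinal.mul_eq_max hOale le_rfl, sup_eq_left.mpr hOale] at h1
    -- injection from Orbs into U and into the complement
    have hrep : ∀ z : ↥Orbs, ∃ x : Ω, (z : Set Ω) = permOrbit g x :=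
      fun z => ⟨z.2.choose, z.2.choose_spec.symm⟩
    choose rep hrep using hrep
    have hkey : ∀ (w : ↥Orbs ⊕ ↥Orbs) ,
        (e ⟨permOrbit g (rep (e.symm w)), ⟨_, rfl⟩⟩) = w := by
      intro w
      have : (⟨permOrbit g (rep (e.symm w)), ⟨_, rfl⟩⟩ : ↥Orbs) = e.symm w :=
        Subtype.ext (hrep (e.symm w)).symm
      rw [this, Equiv.apply_symm_apply]
    have hUge : #↥Orbs ≤ #{x // x ∈ U} := by
      refine Cardinal.mk_le_of_injective (f := fun z : ↥Orbs =>
        (⟨rep (e.symm (Sum.inl z)), by rw [hmemU, hkey]; rfl⟩ : {x // x ∈ U})) ?_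
      intro z w hzw
      have h1 := congrArg (fun t : {x // x ∈ U} => permOrbit g t.1) hzw
      simp only at h1
      rw [← hrep (e.symm (Sum.inl z)), ← hrep (e.symm (Sum.inl w))] at h1
      have h2 : e.symm (Sum.inl z) = e.symm (Sum.inl w) := Subtype.ext h1
      simpa using e.symm.injective h2
    have hVge : #↥Orbs ≤ #{x // x ∉ U} := by
      refine Cardinal.mk_le_of_injective (f := fun z : ↥Orbs =>
        (⟨rep (e.symm (Sum.inr z)), by rw [hmemU, hkey]; exact fun h => by simpa using h⟩ :
          {x // x ∉ U})) ?_
      intro z w hzw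
      have h1 := congrArg (fun t : {x // x ∉ U} => permOrbit g t.1) hzw
      simp only at h1
      rw [← hrep (e.symm (Sum.inr z)), ← hrep (e.symm (Sum.inr w))] at h1
      have h2 : e.symm (Sum.inr z) = e.symm (Sum.inr w) := Subtype.ext h1
      simpa using e.symm.injective h2
    refine ⟨U, hUinv, ?_, ?_⟩
    · exact le_antisymm (Cardinal.mk_subtype_le _) (hOrbsEq ▸ hUge)
    · exact le_antisymm (Cardinal.mk_subtype_le _) (hOrbsEq ▸ hVge)

end Dich

end Rep

namespace Rep

section TwoRays

/-- The canonical single-infinite-orbit permutation on `ℕ ⊕ ℕ`. -/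
def S0 : Perm (ℕ ⊕ ℕ) where
  toFun p := match p with
    | Sum.inl 0 => Sum.inr 0
    | Sum.inl (n+1) => Sum.inl n
    | Sum.inr n => Sum.inr (n+1)
  invFun p := match p with
    | Sum.inr (n+1) => Sum.inr n
    | Sum.inr 0 => Sum.inl 0
    | Sum.inl n => Sum.inl (n+1)
  left_inv := by rintro ((_|n)|n) <;> rfl
  right_inv := by rintro ((_|n)|(_|n)) <;> rfl

@[simp] lemma S0_inl_zero : S0 (Sum.inl 0) = Sum.inr 0 := rfl
@[simp] lemma S0_inl_succ (n : ℕ) : S0 (Sum.inl (n+1)) = Sum.inl n := rfl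
@[simp] lemma S0_inr (n : ℕ) : S0 (Sum.inr n) = Sum.inr (n+1) := rfl

def succEquiv : Option ℕ ≃ ℕ where
  toFun o := o.elim 0 (· + 1)
  invFun n := match n with
    | 0 => none
    | n+1 => some n
  left_inv := by rintro (_|n) <;> rfl
  right_inv := by rintro (_|n) <;> rfl

@[simp] lemma succEquiv_symm_succ (n : ℕ) : succEquiv.symm (n+1) = some n := rfl
@[simp] lemma succEquiv_some (n : ℕ) : succEquiv (some n) = n + 1 := rfl
@[simp] lemma succEquiv_none : succEquiv none = 0 := rfl

def optSum {α β : Type*} : Option (α ⊕ β) ≃ Option α ⊕ β where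
  toFun p := match p with
    | none => Sum.inl none
    | some (Sum.inl a) => Sum.inl (some a)
    | some (Sum.inr b) => Sum.inr b
  invFun p := match p with
    | Sum.inl none => none
    | Sum.inl (some a) => some (Sum.inl a)
    | Sum.inr b => some (Sum.inr b)
  left_inv := by rintro (_|(a|b)) <;> rfl
  right_inv := by rintro ((_|a)|b) <;> rfl

@[simp] lemma optSum_some_inr {α β : Type*} (b : β) :
    (optSum (α := α)) (some (Sum.inr b)) = Sum.inr b := rfl
@[simp] lemma optSum_some_inl {α β : Type*} (a : α) :
    (optSum (β := β)) (some (Sum.inl a)) = Sum.inl (some a) := rfl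

noncomputable section

def E1 : (ℕ ⊕ ℕ) ≃ ℕ := Denumerable.eqv (ℕ ⊕ ℕ)

def rho1 : Perm ℕ := stdPerm ℕ
def rho2 : Perm ℕ := stdPerm ℕ

def deltaE : Option ℕ ≃ ℕ :=
  (Equiv.optionCongr E1.symm).trans (optSum.trans ((Equiv.sumCongr succEquiv rho1).trans E1))

def gammaP : Perm ℕ := (succEquiv.symm.trans deltaE).symm

lemma gammaP_inv_apply (m : ℕ) : gammaP⁻¹ m = deltaE (succEquiv.symm m) := rfl

def cP : Perm (ℕ ⊕ ℕ) := Equiv.sumCongr rho2 gammaP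

def dP : Perm (ℕ ⊕ ℕ) := cP⁻¹ * S0

lemma cP_mul_dP : cP * dP = S0 := by
  rw [dP, mul_inv_cancel_left]

lemma mk_nat_sum_nat : #(ℕ ⊕ ℕ) = Cardinal.aleph0 := Cardinal.mk_eq_aleph0 _

lemma replete_cP : Replete cP := by
  refine replete_of_inj (J := (Sum.inl : ℕ → ℕ ⊕ ℕ)) Sum.inl_injective
    (σ := rho2) (fun a => rfl) ?_ (replete_stdPerm ℕ)
  rw [mk_nat_sum_nat, Cardinal.mk_eq_aleph0 ℕ]

lemma dP_inr (m : ℕ) : dP (Sum.inr m) = Sum.inr (gammaP⁻¹ (m+1)) := by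
  rw [dP, Perm.mul_apply, S0_inr]
  rfl

lemma replete_dP : Replete dP := by
  refine replete_of_inj (J := fun j : ℕ => Sum.inr (E1 (Sum.inr j)))
    (fun a b hab => by simpa using hab)
    (σ := rho1) ?_ ?_ (replete_stdPerm ℕ)
  · intro j
    rw [dP_inr, gammaP_inv_apply]
    congr 1
    rw [succEquiv_symm_succ]
    show deltaE (some (E1 (Sum.inr j))) = E1 (Sum.inr (rho1 j))
    simp [deltaE, ← Equiv.optionCongr_symm]
  · rw [mk_nat_sum_nat, Cardinal.mk_eq_aleph0 ℕ]

/-- The zigzag equivalence between `ℤ` and `ℕ ⊕ ℕ`. -/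
def zig : ℤ ≃ ℕ ⊕ ℕ where
  toFun x := if x < 0 then Sum.inl (-(x+1)).toNat else Sum.inr x.toNat
  invFun p := match p with
    | Sum.inl n => -(n+1)
    | Sum.inr n => n
  left_inv := by
    intro x
    by_cases h : x < 0
    · simp only [h, if_true]
      show -(((-(x+1)).toNat : ℤ) + 1) = x
      omega
    · simp only [h, if_false]
      show (x.toNat : ℤ) = x
      omega
  right_inv := by
    rintro (n|n)
    · have h : (-(n+1) : ℤ) < 0 := by omega
      simp only [h, if_true]
      congr 1
      omega
    · have h : ¬ ((n:ℤ) < 0) := by omega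
      simp only [h, if_false]
      simp

lemma zig_intertwine (x : ℤ) : zig (x + 1) = S0 (zig x) := by
  rcases lt_trichotomy x (-1) with h | h | h
  · have h1 : x < 0 := by omega
    have h2 : x + 1 < 0 := by omega
    have h3 : (-(x+1)).toNat = (-(x+2)).toNat + 1 := by omega
    show (if x + 1 < 0 then Sum.inl (-(x+1+1)).toNat else Sum.inr (x+1).toNat)
        = S0 (if x < 0 then Sum.inl (-(x+1)).toNat else Sum.inr x.toNat)
    rw [if_pos h2, if_pos h1, h3, S0_inl_succ]
    congr 1
    omega
  · subst h
    have e1 : zig ((-1:ℤ) + 1) = Sum.inr 0 := by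
      show (if ((-1:ℤ)+1) < 0 then Sum.inl (-((-1:ℤ)+1+1)).toNat else Sum.inr ((-1:ℤ)+1).toNat)
          = Sum.inr 0
      rw [if_neg (by omega)]
      norm_num
    have e2 : zig (-1:ℤ) = Sum.inl 0 := by
      show (if (-1:ℤ) < 0 then Sum.inl (-((-1:ℤ)+1)).toNat else Sum.inr ((-1:ℤ)).toNat)
          = Sum.inl 0
      rw [if_pos (by omega)]
      norm_num
    rw [e1, e2, S0_inl_zero]
  · have h1 : ¬ (x < 0) := by omega
    have h2 : ¬ (x + 1 < 0) := by omega
    have h3 : (x+1).toNat = x.toNat + 1 := by omega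
    show (if x + 1 < 0 then Sum.inl (-(x+1+1)).toNat else Sum.inr (x+1).toNat)
        = S0 (if x < 0 then Sum.inl (-(x+1)).toNat else Sum.inr x.toNat)
    rw [if_neg h2, if_neg h1, h3, S0_inr]

end

end TwoRays

end Rep

namespace Rep

section Hard

variable {Ω : Type u} [Infinite Ω]

omit [Infinite Ω] in
lemma fix_zpow {f : Perm Ω} {x : Ω} (h : f x = x) : ∀ n : ℤ, (f ^ n) x = x := by
  intro n
  have := zpow_comm (f := f) (σ := (1 : Perm PUnit.{1})) (J := fun _ => x)
    (fun _ => by simpa using h) n PUnit.unit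
  simpa using this

omit [Infinite Ω] in
lemma period_reduce {f : Perm Ω} {x : Ω} {p : ℕ} (hp : 0 < p) (h : (f ^ p) x = x) :
    ∀ i : ℤ, (f ^ i) x = (f ^ ((i % (p:ℤ)).toNat)) x := by
  intro i
  have hdecomp : i = (i % (p:ℤ)) + (p:ℤ) * (i / (p:ℤ)) := by
    rw [add_comm]; exact (Int.mul_ediv_add_emod i p).symm
  have hfixz : (f ^ ((p:ℤ) * (i / (p:ℤ)))) x = x := by
    rw [zpow_mul]
    refine fix_zpow ?_ _
    rw [zpow_natCast]
    exact h
  have hmodnn : 0 ≤ i % (p:ℤ) := Int.emod_nonneg i (by exact_mod_cast hp.ne')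
  calc (f ^ i) x = (f ^ ((i % (p:ℤ)) + (p:ℤ) * (i / (p:ℤ)))) x := by rw [← hdecomp]
    _ = (f ^ (i % (p:ℤ))) ((f ^ ((p:ℤ) * (i / (p:ℤ)))) x) := by
        rw [zpow_add, Perm.mul_apply]
    _ = (f ^ (i % (p:ℤ))) x := by rw [hfixz]
    _ = (f ^ ((i % (p:ℤ)).toNat)) x := by
        rw [← zpow_natCast, Int.toNat_of_nonneg hmodnn]

omit [Infinite Ω] in
lemma zpow_injective_of_infinite_orbit {g : Perm Ω} {x₀ : Ω}
    (hinf : (permOrbit g x₀).Infinite) :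
    Function.Injective (fun i : ℤ => (g ^ i) x₀) := by
  have noper : ∀ p : ℕ, 0 < p → (g ^ p) x₀ ≠ x₀ := by
    intro p hp hpx
    apply hinf
    have : permOrbit g x₀ ⊆ Set.range (fun k : Fin p => (g ^ (k : ℕ)) x₀) := by
      rintro y ⟨i, rfl⟩
      refine ⟨⟨(i % (p:ℤ)).toNat, ?_⟩, ?_⟩
      · have h1 : i % (p:ℤ) < (p:ℤ) := Int.emod_lt_of_pos i (by exact_mod_cast hp)
        omega
      · exact (period_reduce hp hpx i).symm
    exact Set.Finite.subset (Set.finite_range _) this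
  have noperZ : ∀ z : ℤ, (g ^ z) x₀ = x₀ → z = 0 := by
    intro z hz
    by_contra hz0
    rcases lt_or_gt_of_ne hz0 with hneg | hpos
    · have : (g ^ (-z)) x₀ = x₀ := by
        have := congrArg (fun y => (g ^ (-z)) y) hz
        simpa [← Perm.mul_apply, ← zpow_add] using this.symm
      have h2 : (g ^ ((-z).toNat)) x₀ = x₀ := by
        have h3 : (((-z).toNat : ℕ) : ℤ) = -z := Int.toNat_of_nonneg (by omega)
        rw [← zpow_natCast, h3]; exact this
      exact noper _ (by omega) h2
    · have h2 : (g ^ (z.toNat)) x₀ = x₀ := by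
        have h3 : ((z.toNat : ℕ) : ℤ) = z := Int.toNat_of_nonneg (by omega)
        rw [← zpow_natCast, h3]; exact hz
      exact noper _ (by omega) h2
  intro i j hij
  simp only at hij
  have : (g ^ (i - j)) x₀ = x₀ := by
    have h1 : (g ^ (i - j)) ((g ^ j) x₀) = (g ^ j) x₀ := by
      rw [← Perm.mul_apply, ← zpow_add, sub_add_cancel, hij]
    have h2 := congrArg (fun y => (g ^ (-j)) y) h1
    simp only [← Perm.mul_apply, ← zpow_add] at h2
    rw [neg_add_cancel] at h2
    simpa [add_comm, ← zpow_add, sub_eq_add_neg] using h2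
  have := noperZ _ this
  omega

lemma hard_case (g : Perm Ω) (x₀ : Ω) (hc : ((permOrbit g x₀)ᶜ).Finite) :
    ∃ a b : Perm Ω, Replete a ∧ Replete b ∧ g = a * b := by
  classical
  set O := permOrbit g x₀ with hO
  have hOinf : O.Infinite := by
    have := hc.infinite_compl
    rwa [compl_compl] at this
  set Oc := {x : Ω // x ∉ O} with hOc
  have hOcFin : Finite Oc := by
    have h1 : Finite ↥(Oᶜ) := hc.to_subtype
    exact Finite.of_equiv ↥(Oᶜ) (Equiv.subtypeEquivRight (fun x => by simp))
  have hinvc : ∀ x : Ω, x ∉ O ↔ g x ∉ O := fun x => not_iff_not.mpr mem_permOrbit_iff_apply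
  set gOc : Perm Oc := g.subtypePerm (fun x => (hinvc x).symm) with hgOc
  set K : ℕ ⊕ ℕ → Ω := fun p => (g ^ (zig.symm p)) x₀ with hK
  have hKmem : ∀ p, K p ∈ O := fun p => ⟨zig.symm p, rfl⟩
  have hKinj : Function.Injective K := fun p q hpq =>
    zig.symm.injective (zpow_injective_of_infinite_orbit hOinf hpq)
  set F : (ℕ ⊕ ℕ) ⊕ Oc → Ω := fun q => Sum.elim K (fun y => y.1) q with hF
  have hFbij : Function.Bijective F := by
    constructor
    · rintro (p|y) (q|z) h <;>
        simp only [hF, Sum.elim_inl, Sum.elim_inr] at h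
      · exact congrArg Sum.inl (hKinj h)
      · exact (z.2 (h ▸ hKmem p)).elim
      · exact (y.2 (h.symm ▸ hKmem q)).elim
      · exact congrArg Sum.inr (Subtype.ext h)
    · intro x
      by_cases hx : x ∈ O
      · obtain ⟨i, hi⟩ := hx
        refine ⟨Sum.inl (zig i), ?_⟩
        show K (zig i) = x
        rw [hK]
        simp only
        rw [Equiv.symm_apply_apply]
        exact hi
      · exact ⟨Sum.inr ⟨x, hx⟩, rfl⟩
  set E : Ω ≃ ((ℕ ⊕ ℕ) ⊕ Oc) := (Equiv.ofBijective F hFbij).symm with hE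
  have hEF : ∀ x, F (E x) = x := fun x => (Equiv.ofBijective F hFbij).apply_symm_apply x
  have hint : ∀ q, g (F q) = F (Equiv.sumCongr S0 gOc q) := by
    rintro (p|y)
    · show g (K p) = K (S0 p)
      have h0 := zig_intertwine (zig.symm p)
      rw [Equiv.apply_symm_apply] at h0
      have h1 : zig.symm (S0 p) = zig.symm p + 1 := by
        rw [← h0, Equiv.symm_apply_apply]
      rw [hK]
      simp only
      rw [h1, show zig.symm p + 1 = 1 + zig.symm p from add_comm _ _, zpow_add, zpow_one,
        Perm.mul_apply]
    · show g y.1 = (gOc y).1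
      rfl
  have hMinf : Infinite ((ℕ ⊕ ℕ) ⊕ Oc) := Infinite.of_injective Sum.inl Sum.inl_injective
  have hMcard : Cardinal.lift.{0} #((ℕ ⊕ ℕ) ⊕ Oc) = Cardinal.lift.{u} #(ℕ ⊕ ℕ) := by
    rw [Cardinal.mk_eq_aleph0, Cardinal.mk_eq_aleph0]
    simp
  set aM : Perm ((ℕ ⊕ ℕ) ⊕ Oc) := Equiv.sumCongr cP gOc with haM
  set bM : Perm ((ℕ ⊕ ℕ) ⊕ Oc) := Equiv.sumCongr dP 1 with hbM
  have hRaM : Replete aM := by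
    refine replete_of_inj (J := (Sum.inl : (ℕ ⊕ ℕ) → (ℕ ⊕ ℕ) ⊕ Oc)) Sum.inl_injective
      (σ := cP) (fun z => rfl) hMcard replete_cP
  have hRbM : Replete bM := by
    refine replete_of_inj (J := (Sum.inl : (ℕ ⊕ ℕ) → (ℕ ⊕ ℕ) ⊕ Oc)) Sum.inl_injective
      (σ := dP) (fun z => rfl) hMcard replete_dP
  refine ⟨permCongrHom E.symm aM, permCongrHom E.symm bM,
    replete_permCongrHom E.symm hRaM, replete_permCongrHom E.symm hRbM, ?_⟩
  rw [← map_mul]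
  have hprod : aM * bM = Equiv.sumCongr S0 gOc := by
    rw [haM, hbM, Equiv.Perm.sumCongr_mul, cP_mul_dP, mul_one]
  rw [hprod]
  ext x
  rw [permCongrHom_apply']
  show g x = F (Equiv.sumCongr S0 gOc (E.symm.symm x))
  rw [Equiv.symm_symm, ← hint (E x), hEF]

end Hard

end Rep

namespace Rep

section Canon

variable {Ω : Type u} {f g : Perm Ω}

lemma fix_pow {f : Perm Ω} {y : Ω} (h : f y = y) : ∀ q : ℕ, (f ^ q) y = y := by
  intro q
  induction q with
  | zero => simp
  | succ k ih => rw [pow_succ, Perm.mul_apply, h, ih]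

lemma pow_apply_add (f : Perm Ω) (a b : ℕ) (y : Ω) :
    (f ^ (a + b)) y = (f ^ a) ((f ^ b) y) := by
  rw [pow_add, Perm.mul_apply]

lemma pow_mod_eq {f : Perm Ω} {x : Ω} {p : ℕ} (hp : 0 < p) (hfix : (f ^ p) x = x) :
    ∀ a : ℕ, (f ^ a) x = (f ^ (a % p)) x := by
  intro a
  conv_lhs => rw [show a = a % p + p * (a / p) from by rw [Nat.mod_add_div]]
  rw [pow_apply_add]
  congr 1
  rw [pow_mul]
  exact fix_pow (by exact hfix) _

lemma pow_congr_mod {f : Perm Ω} {x : Ω} {p : ℕ} (hp : 0 < p) (hfix : (f ^ p) x = x)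
    {a b : ℕ} (hab : a % p = b % p) : (f ^ a) x = (f ^ b) x := by
  rw [pow_mod_eq hp hfix a, pow_mod_eq hp hfix b, hab]

lemma zpow_injective_of_no_period {f : Perm Ω} {x₀ : Ω}
    (noper : ∀ p : ℕ, 0 < p → (f ^ p) x₀ ≠ x₀) :
    Function.Injective (fun i : ℤ => (f ^ i) x₀) := by
  have noperZ : ∀ z : ℤ, (f ^ z) x₀ = x₀ → z = 0 := by
    intro z hz
    by_contra hz0
    rcases lt_or_gt_of_ne hz0 with hneg | hpos
    · have h1 : (f ^ (-z)) x₀ = x₀ := by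
        have := congrArg (fun y => (f ^ (-z)) y) hz
        simpa [← Perm.mul_apply, ← zpow_add] using this.symm
      have h2 : (f ^ ((-z).toNat)) x₀ = x₀ := by
        have h3 : (((-z).toNat : ℕ) : ℤ) = -z := Int.toNat_of_nonneg (by omega)
        rw [← zpow_natCast, h3]; exact h1
      exact noper _ (by omega) h2
    · have h2 : (f ^ (z.toNat)) x₀ = x₀ := by
        have h3 : ((z.toNat : ℕ) : ℤ) = z := Int.toNat_of_nonneg (by omega)
        rw [← zpow_natCast, h3]; exact hz
      exact noper _ (by omega) h2
  intro i j hij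
  simp only at hij
  have key : (f ^ (i - j)) x₀ = x₀ := by
    have h1 : (f ^ (i - j)) ((f ^ j) x₀) = (f ^ j) x₀ := by
      rw [← Perm.mul_apply, ← zpow_add, sub_add_cancel, hij]
    have h2 := congrArg (fun y => (f ^ (-j)) y) h1
    simp only [← Perm.mul_apply, ← zpow_add] at h2
    rw [neg_add_cancel] at h2
    simpa [add_comm, ← zpow_add, sub_eq_add_neg] using h2
  have := noperZ _ key
  omega

/-- Canonical form of a single orbit. -/
lemma canon (f : Perm Ω) (x : Ω) :
    (∃ (m : ℕ) (e : Fin (m+1) ≃ ↥(permOrbit f x)),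
        (#↥(permOrbit f x) = ((m+1 : ℕ) : Cardinal)) ∧
        ∀ k : Fin (m+1), ((e (k+1)) : Ω) = f (e k)) ∨
    (∃ e : ℤ ≃ ↥(permOrbit f x),
        (#↥(permOrbit f x) = Cardinal.aleph0) ∧
        ∀ k : ℤ, ((e (k+1)) : Ω) = f (e k)) := by
  classical
  by_cases hper : ∃ p : ℕ, 0 < p ∧ (f ^ p) x = x
  · left
    obtain ⟨hppos, hpfix⟩ := Nat.find_spec hper
    set m := Nat.find hper - 1 with hmdef
    have hm : Nat.find hper = m + 1 := by omega
    have hpfix' : (f ^ (m+1)) x = x := by rw [← hm]; exact hpfix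
    have hmin : ∀ q, 0 < q → q < m + 1 → (f ^ q) x ≠ x := by
      intro q hq0 hqp hqfix
      exact Nat.find_min hper (by rw [hm]; exact hqp) ⟨hq0, hqfix⟩
    set φ : Fin (m+1) → ↥(permOrbit f x) :=
      fun k => ⟨(f ^ (k : ℕ)) x, ⟨((k : ℕ) : ℤ), by rw [zpow_natCast]⟩⟩ with hφ
    have hφval : ∀ k, (φ k : Ω) = (f ^ (k : ℕ)) x := fun k => rfl
    have hinj : Function.Injective φ := by
      intro k k' hkk
      have hv : (f ^ (k : ℕ)) x = (f ^ (k' : ℕ)) x := congrArg Subtype.val hkk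
      by_contra hne
      have hvne : (k : ℕ) ≠ (k' : ℕ) := fun h => hne (Fin.ext h)
      have key : ∀ u v : ℕ, u < v → v < m + 1 → (f ^ u) x = (f ^ v) x → False := by
        intro u v huv hvlt heq
        have hdec : (f ^ v) x = (f ^ (u + (v - u))) x := by rw [Nat.add_sub_cancel' huv.le]
        rw [hdec, pow_apply_add] at heq
        have h5 : (f ^ (v - u)) x = x := (f ^ u).injective heq.symm
        exact hmin (v - u) (by omega) (by omega) h5
      rcases lt_or_gt_of_ne hvne with h | h
      · exact key _ _ h k'.2 hv
      · exact key _ _ h k.2 hv.symm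
    have hsurj : Function.Surjective φ := by
      rintro ⟨z, i, rfl⟩
      have h1 : (f ^ i) x = (f ^ ((i % ((m+1:ℕ):ℤ)).toNat)) x := by
        exact period_reduce (p := m + 1) (by omega) hpfix' i
      have h2 : (i % ((m+1:ℕ):ℤ)).toNat < m + 1 := by
        have := Int.emod_lt_of_pos i (show (0:ℤ) < ((m+1:ℕ):ℤ) by omega)
        have := Int.emod_nonneg i (show ((m+1:ℕ):ℤ) ≠ 0 by omega)
        omega
      refine ⟨⟨(i % ((m+1:ℕ):ℤ)).toNat, h2⟩, ?_⟩
      apply Subtype.ext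
      rw [hφval]
      exact h1.symm
    set e := Equiv.ofBijective φ ⟨hinj, hsurj⟩ with he
    refine ⟨m, e, ?_, ?_⟩
    · have h0 : #(Fin (m+1)) = ((m+1 : ℕ) : Cardinal.{0}) := by
        rw [Cardinal.mk_fintype, Fintype.card_fin]
      exact (card_transfer e (by rw [Cardinal.lift_natCast, Cardinal.lift_natCast])).mp h0
    · intro k
      show (φ (k+1) : Ω) = f (φ k : Ω)
      rw [hφval, hφval]
      have h1 : (f ^ ((k.val + 1) : ℕ)) x = f ((f ^ (k.val : ℕ)) x) := by
        rw [pow_succ', Perm.mul_apply]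
      rw [← h1]
      refine pow_congr_mod (p := m + 1) (by omega) hpfix' ?_
      have hv1 : ((1 : Fin (m+1)) : ℕ) = 1 % (m+1) := Fin.val_one' (m+1)
      have hva : ((k + 1 : Fin (m+1)) : ℕ) = ((k : ℕ) + ((1 : Fin (m+1)) : ℕ)) % (m+1) :=
        Fin.val_add k 1
      calc ((k + 1 : Fin (m+1)) : ℕ) % (m+1)
          = (((k : ℕ) + ((1 : Fin (m+1)) : ℕ)) % (m+1)) % (m+1) := by rw [hva]
        _ = ((k : ℕ) + ((1 : Fin (m+1)) : ℕ)) % (m+1) := Nat.mod_mod_of_dvd _ dvd_rfl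
        _ = ((k : ℕ) + 1 % (m+1)) % (m+1) := by rw [hv1]
        _ = ((k : ℕ) + 1) % (m+1) := Nat.ModEq.add_left _ (Nat.mod_modEq 1 (m+1))
  · right
    push_neg at hper
    have noper : ∀ p : ℕ, 0 < p → (f ^ p) x ≠ x := fun p hp => hper p hp
    set φ : ℤ → ↥(permOrbit f x) := fun i => ⟨(f ^ i) x, ⟨i, rfl⟩⟩ with hφ
    have hφval : ∀ i, (φ i : Ω) = (f ^ i) x := fun i => rfl
    have hinj : Function.Injective φ := by
      intro i j hij
      exact zpow_injective_of_no_period noper (congrArg Subtype.val hij)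
    have hsurj : Function.Surjective φ := by
      rintro ⟨z, i, rfl⟩
      exact ⟨i, rfl⟩
    set e := Equiv.ofBijective φ ⟨hinj, hsurj⟩ with he
    refine ⟨e, ?_, ?_⟩
    · have h0 : #ℤ = Cardinal.aleph0 := Cardinal.mk_int
      exact (card_transfer e (by rw [Cardinal.lift_aleph0, Cardinal.lift_aleph0])).mp h0
    · intro k
      show (φ (k+1) : Ω) = f (φ k : Ω)
      rw [hφval, hφval, show k + 1 = 1 + k from add_comm _ _, zpow_add, zpow_one,
        Perm.mul_apply]

end Canon

end Rep

namespace Rep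

section Conj

variable {Ω : Type u}

lemma match_orbits {f g : Perm Ω} {O O' : Set Ω} (hO : ∃ x, O = permOrbit f x)
    (hO' : ∃ y, O' = permOrbit g y) (hcc : #↥O = #↥O') :
    ∃ e : ↥O ≃ ↥O', ∀ (z w : ↥O), (w : Ω) = f z → ((e w : Ω)) = g (e z) := by
  obtain ⟨x, rfl⟩ := hO
  obtain ⟨y, rfl⟩ := hO'
  rcases canon f x with ⟨m, ef, hcf, hif⟩ | ⟨ef, hcf, hif⟩ <;>
    rcases canon g y with ⟨m', eg, hcg, hig⟩ | ⟨eg, hcg, hig⟩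
  · rw [hcf, hcg] at hcc
    have hmm : m = m' := by
      have := Nat.cast_injective (R := Cardinal) hcc
      omega
    subst hmm
    refine ⟨ef.symm.trans eg, ?_⟩
    intro z w hw
    have hz : ef (ef.symm z) = z := ef.apply_symm_apply z
    have hw2 : w = ef (ef.symm z + 1) := by
      apply Subtype.ext
      rw [hw, hif (ef.symm z), hz]
    show ((eg (ef.symm w)) : Ω) = g (eg (ef.symm z))
    rw [hw2, Equiv.symm_apply_apply, hig]
  · rw [hcf, hcg] at hcc
    exact absurd hcc (Cardinal.nat_lt_aleph0 _).ne
  · rw [hcf, hcg] at hcc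
    exact absurd hcc.symm (Cardinal.nat_lt_aleph0 _).ne
  · refine ⟨ef.symm.trans eg, ?_⟩
    intro z w hw
    have hz : ef (ef.symm z) = z := ef.apply_symm_apply z
    have hw2 : w = ef (ef.symm z + 1) := by
      apply Subtype.ext
      rw [hw, hif (ef.symm z), hz]
    show ((eg (ef.symm w)) : Ω) = g (eg (ef.symm z))
    rw [hw2, Equiv.symm_apply_apply, hig]

lemma orbitSets_empty (f : Perm Ω) (c : Cardinal.{u}) (hc : ¬(0 < c ∧ c ≤ Cardinal.aleph0)) :
    IsEmpty {s : Set Ω // (∃ x, s = permOrbit f x) ∧ #s = c} := by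
  constructor
  rintro ⟨s, ⟨x, rfl⟩, hcard⟩
  exact hc ⟨hcard ▸ mk_permOrbit_pos f x, hcard ▸ mk_permOrbit_le f x⟩

theorem replete_isConj [Infinite Ω] {f g : Perm Ω} (hf : Replete f) (hg : Replete g) :
    IsConj f g := by
  classical
  set Sf : Cardinal.{u} → Type u :=
    fun c => {s : Set Ω // (∃ x, s = permOrbit f x) ∧ #s = c} with hSf
  set Sg : Cardinal.{u} → Type u :=
    fun c => {s : Set Ω // (∃ y, s = permOrbit g y) ∧ #s = c} with hSg
  have hcards : ∀ c, #(Sf c) = #(Sg c) := by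
    intro c
    by_cases hc : 0 < c ∧ c ≤ Cardinal.aleph0
    · rw [hf c hc.1 hc.2, hg c hc.1 hc.2]
    · have h1 := orbitSets_empty f c hc
      have h2 := orbitSets_empty g c hc
      rw [hSf, hSg]
      simp only
      rw [Cardinal.mk_eq_zero, Cardinal.mk_eq_zero]
  have Φ : ∀ c, Sf c ≃ Sg c := fun c => Classical.choice (Cardinal.eq.mp (hcards c))
  have H : ∀ (c) (s : Sf c),
      {e : ↥s.1 ≃ ↥((Φ c s).1) // ∀ z w : ↥s.1, (w : Ω) = f z → ((e w : Ω)) = g (e z)} := by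
    intro c s
    refine Classical.choice (nonempty_subtype.mpr ?_)
    exact match_orbits s.2.1 (Φ c s).2.1 (s.2.2.trans (Φ c s).2.2.symm)
  set T : Ω → Ω := fun x =>
    ((H (#(permOrbit f x)) ⟨permOrbit f x, ⟨x, rfl⟩, rfl⟩).1 ⟨x, self_mem_permOrbit f x⟩ : Ω)
    with hT
  have Hcongr : ∀ {c c' : Cardinal.{u}} (_ : c = c') (s : Sf c) (s' : Sf c') (_ : s.1 = s'.1)
      (z : Ω) (hz : z ∈ s.1) (hz' : z ∈ s'.1),
      ((H c s).1 ⟨z, hz⟩ : Ω) = ((H c' s').1 ⟨z, hz'⟩ : Ω) := by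
    rintro c c' rfl s s' hs z hz hz'
    have hss : s = s' := Subtype.ext hs
    subst hss
    rfl
  have Φcongr : ∀ {c c' : Cardinal.{u}} (_ : c = c') (s : Sf c) (s' : Sf c') (_ : s.1 = s'.1),
      (Φ c s).1 = (Φ c' s').1 := by
    rintro c c' rfl s s' hs
    rw [Subtype.ext hs]
  have orbmem_f : ∀ (c) (s : Sf c) (z : Ω), z ∈ s.1 → permOrbit f z = s.1 := by
    rintro c ⟨s, ⟨x, rfl⟩, hc⟩ z hz
    exact permOrbit_eq_of_mem hz
  have orbmem_g : ∀ (c) (t : Sg c) (z : Ω), z ∈ t.1 → permOrbit g z = t.1 := by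
    rintro c ⟨t, ⟨y, rfl⟩, hc⟩ z hz
    exact permOrbit_eq_of_mem hz
  -- universal description of T
  have U1 : ∀ (c) (s : Sf c) (z : Ω) (hz : z ∈ s.1), T z = ((H c s).1 ⟨z, hz⟩ : Ω) := by
    intro c s z hz
    have hs : permOrbit f z = s.1 := orbmem_f c s z hz
    have hc : #(permOrbit f z) = c := by rw [hs]; exact s.2.2
    exact Hcongr hc _ s hs z (self_mem_permOrbit f z) hz
  -- orbit of T z
  have U2 : ∀ (c) (s : Sf c) (z : Ω) (hz : z ∈ s.1), permOrbit g (T z) = (Φ c s).1 := by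
    intro c s z hz
    rw [U1 c s z hz]
    exact orbmem_g c (Φ c s) _ ((H c s).1 ⟨z, hz⟩).2
  have hinj : Function.Injective T := by
    intro x x' h
    set cx := #(permOrbit f x) with hcx
    set cx' := #(permOrbit f x') with hcx'
    set sx : Sf cx := ⟨permOrbit f x, ⟨x, rfl⟩, rfl⟩ with hsx
    set sx' : Sf cx' := ⟨permOrbit f x', ⟨x', rfl⟩, rfl⟩ with hsx'
    have e1 : (Φ cx sx).1 = (Φ cx' sx').1 := by
      rw [← U2 cx sx x (self_mem_permOrbit f x), ← U2 cx' sx' x' (self_mem_permOrbit f x'), h]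
    have e2 : cx = cx' := by
      rw [← (Φ cx sx).2.2, ← (Φ cx' sx').2.2, e1]
    -- transfer sx' to an Sf cx element
    set sxa : Sf cx := ⟨permOrbit f x', ⟨x', rfl⟩, e2.symm⟩ with hsxa
    have e3 : (Φ cx sxa).1 = (Φ cx sx).1 := by
      rw [Φcongr e2 sxa sx' rfl, e1]
    have e4 : sx = sxa := (Φ cx).injective (Subtype.ext e3.symm)
    have e5 : permOrbit f x = permOrbit f x' := congrArg Subtype.val e4
    have hx'mem : x' ∈ sx.1 := by
      show x' ∈ permOrbit f x
      rw [e5]; exact self_mem_permOrbit f x'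
    have e6 : T x' = ((H cx sx).1 ⟨x', hx'mem⟩ : Ω) := U1 cx sx x' hx'mem
    have e7 : ((H cx sx).1 ⟨x, self_mem_permOrbit f x⟩ : Ω) =
        ((H cx sx).1 ⟨x', hx'mem⟩ : Ω) := by
      rw [← e6, ← h]
    have e8 := (H cx sx).1.injective (Subtype.ext e7)
    exact congrArg Subtype.val e8
  have hsurj : Function.Surjective T := by
    intro y
    set c' := #(permOrbit g y) with hc'
    set t : Sg c' := ⟨permOrbit g y, ⟨y, rfl⟩, rfl⟩ with ht
    set s : Sf c' := (Φ c').symm t with hs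
    have hΦs : Φ c' s = t := (Φ c').apply_symm_apply t
    have hymem : y ∈ (Φ c' s).1 := by
      rw [hΦs]; exact self_mem_permOrbit g y
    set u := (H c' s).1.symm ⟨y, hymem⟩ with hu
    refine ⟨(u : Ω), ?_⟩
    have hxmem : (u : Ω) ∈ s.1 := u.2
    rw [U1 c' s (u : Ω) hxmem]
    show ((H c' s).1 u : Ω) = y
    rw [hu]
    exact congrArg Subtype.val ((H c' s).1.apply_symm_apply ⟨y, hymem⟩)
  have hcomm : ∀ x, T (f x) = g (T x) := by
    intro x
    set cx := #(permOrbit f x) with hcx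
    set sx : Sf cx := ⟨permOrbit f x, ⟨x, rfl⟩, rfl⟩ with hsx
    have hfmem : f x ∈ sx.1 := mem_permOrbit_iff_apply.mp (self_mem_permOrbit f x)
    rw [U1 cx sx (f x) hfmem]
    exact (H cx sx).2 ⟨x, self_mem_permOrbit f x⟩ ⟨f x, hfmem⟩ rfl
  -- assemble the conjugation
  set E : Perm Ω := Equiv.ofBijective T ⟨hinj, hsurj⟩ with hE
  rw [isConj_iff]
  refine ⟨E, ?_⟩
  ext y
  rw [Perm.mul_apply, Perm.mul_apply]
  show E (f (E⁻¹ y)) = g y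
  have h1 : E (f (E⁻¹ y)) = T (f (E⁻¹ y)) := rfl
  rw [h1, hcomm]
  have h2 : T (E⁻¹ y) = E (E⁻¹ y) := rfl
  rw [h2]
  exact congrArg g (E.apply_symm_apply y)

end Conj

end Rep

theorem stmt19 {Ω : Type*} [Infinite Ω] (f : Equiv.Perm Ω) :
    ∃ a b : Equiv.Perm Ω, Replete a ∧ Replete b ∧ IsConj a b ∧ f = a * b := by
  rcases Rep.dichotomy f with ⟨x₀, hc⟩ | ⟨U, hU, h1, h2⟩
  · obtain ⟨a, b, ha, hb, hab⟩ := Rep.hard_case f x₀ hc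
    exact ⟨a, b, ha, hb, Rep.replete_isConj ha hb, hab⟩
  · obtain ⟨a, b, ha, hb, hab⟩ := Rep.split_case f U hU h1 h2
    exact ⟨a, b, ha, hb, Rep.replete_isConj ha hb, hab⟩
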